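/- Let k ≤ n be positive integers and C > 0. Suppose v ∈ ℝⁿ satisfies ‖v‖₁ ≤ C and ‖v‖_∞ ≤ C/k. Then there exist finitely many vectors w₁, …, w_M ∈ ℝⁿ and nonnegative reals x₁, …, x_M with Σ xₜ = 1 such that v = Σ xₜ wₜ, each wₜ is k-sparse (has at most k nonzero entries), ‖wₜ‖₁ = ‖v‖₁, and ‖wₜ‖_∞ ≤ C/k for every t. -/

import Mathlib

/-- ℓ₁ norm of a vector in ℝᵐ. -/
noncomputable def l1 {m : ℕ} (v : Fin m → ℝ) : ℝ := ∑ i, |v i|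

/-- A vector is `k`-sparse if it has at most `k` nonzero components. -/
def Sparse {m : ℕ} (k : ℕ) (v : Fin m → ℝ) : Prop :=
  ∃ s : Finset (Fin m), s.card ≤ k ∧ ∀ i ∉ s, v i = 0

/-- Convex decomposition into finitely many vectors each satisfying `P`. -/
def Decomp {n : ℕ} (P : (Fin n → ℝ) → Prop) (x : Fin n → ℝ) : Prop :=
  ∃ (M : ℕ) (w : Fin M → Fin n → ℝ) (l : Fin M → ℝ),
    (∀ t, 0 ≤ l t) ∧ (∑ t, l t) = 1 ∧ x = (∑ t, l t • w t) ∧ ∀ t, P (w t)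

lemma decomp_self {n : ℕ} {P : (Fin n → ℝ) → Prop} {x : Fin n → ℝ} (h : P x) :
    Decomp P x :=
  ⟨1, fun _ => x, fun _ => 1, fun _ => zero_le_one, by simp, by simp, fun _ => h⟩

lemma decomp_mono {n : ℕ} {P Q : (Fin n → ℝ) → Prop} {x : Fin n → ℝ}
    (h : ∀ w, P w → Q w) : Decomp P x → Decomp Q x := by
  rintro ⟨M, w, l, h1, h2, h3, h4⟩
  exact ⟨M, w, l, h1, h2, h3, fun t => h _ (h4 t)⟩

lemma decomp_combine {n : ℕ} {P : (Fin n → ℝ) → Prop} {x y z : Fin n → ℝ} {lam : ℝ}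
    (h0 : 0 ≤ lam) (h1 : lam ≤ 1) (hx : x = lam • y + (1 - lam) • z)
    (hy : Decomp P y) (hz : Decomp P z) : Decomp P x := by
  obtain ⟨M₁, w₁, l₁, hl₁, hs₁, he₁, hP₁⟩ := hy
  obtain ⟨M₂, w₂, l₂, hl₂, hs₂, he₂, hP₂⟩ := hz
  refine ⟨M₁ + M₂, Fin.append w₁ w₂,
    Fin.append (fun t => lam * l₁ t) (fun t => (1 - lam) * l₂ t), ?_, ?_, ?_, ?_⟩
  · intro t
    refine Fin.addCases (fun t => ?_) (fun t => ?_) t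
    · rw [Fin.append_left]; exact mul_nonneg h0 (hl₁ t)
    · rw [Fin.append_right]; exact mul_nonneg (by linarith) (hl₂ t)
  · rw [Fin.sum_univ_add]
    simp only [Fin.append_left, Fin.append_right, ← Finset.mul_sum, hs₁, hs₂]
    ring
  · rw [hx, he₁, he₂, Fin.sum_univ_add]
    simp only [Fin.append_left, Fin.append_right, Finset.smul_sum, smul_smul]
  · intro t
    refine Fin.addCases (fun t => ?_) (fun t => ?_) t
    · rw [Fin.append_left]; exact hP₁ t
    · rw [Fin.append_right]; exact hP₂ t

/-- terminal case: at most one fractional coordinate implies support ≤ k. -/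
lemma terminal_card {n k : ℕ} (x : Fin n → ℝ) (h0 : ∀ i, 0 ≤ x i) (h1 : ∀ i, x i ≤ 1)
    (hs : (∑ i, x i) ≤ (k : ℝ))
    (hf : (Finset.univ.filter (fun i => x i ≠ 0 ∧ x i ≠ 1)).card ≤ 1) :
    (Finset.univ.filter (fun i => x i ≠ 0)).card ≤ k := by
  classical
  set O := Finset.univ.filter (fun i => x i = 1) with hO
  set Fr := Finset.univ.filter (fun i => x i ≠ 0 ∧ x i ≠ 1) with hFr
  set S := Finset.univ.filter (fun i => x i ≠ 0) with hS
  have hSsub : S ⊆ O ∪ Fr := by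
    intro i hi
    simp only [hS, hO, hFr, Finset.mem_filter, Finset.mem_union, Finset.mem_univ,
      true_and] at *
    by_cases h : x i = 1
    · exact Or.inl h
    · exact Or.inr ⟨hi, h⟩
  have hOsum : (O.card : ℝ) = ∑ i ∈ O, x i := by
    rw [Finset.sum_congr rfl (fun i hi => (Finset.mem_filter.mp hi).2)]
    rw [Finset.sum_const, nsmul_eq_mul, mul_one]
  by_cases hFe : Fr = ∅
  · have hSO : S ⊆ O := by rw [hFe] at hSsub; simpa using hSsub
    have h1 : (O.card : ℝ) ≤ (k : ℝ) := by
      rw [hOsum]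
      exact le_trans (Finset.sum_le_sum_of_subset_of_nonneg (Finset.subset_univ O)
        (fun i _ _ => h0 i)) hs
    exact le_trans (Finset.card_le_card hSO) (Nat.cast_le.mp h1)
  · obtain ⟨i₀, hi₀⟩ := Finset.nonempty_iff_ne_empty.mpr hFe
    have hi₀' := Finset.mem_filter.mp hi₀
    have hxpos : 0 < x i₀ := lt_of_le_of_ne (h0 i₀) (Ne.symm hi₀'.2.1)
    have hi₀O : i₀ ∉ O := by
      simp only [hO, Finset.mem_filter, Finset.mem_univ, true_and]
      exact hi₀'.2.2
    have h2 : (O.card : ℝ) + x i₀ ≤ (k : ℝ) := by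
      have : (O.card : ℝ) + x i₀ = ∑ i ∈ insert i₀ O, x i := by
        rw [Finset.sum_insert hi₀O, hOsum]; ring
      rw [this]
      exact le_trans (Finset.sum_le_sum_of_subset_of_nonneg (Finset.subset_univ _)
        (fun i _ _ => h0 i)) hs
    have h3 : O.card < k := by
      have : (O.card : ℝ) < (k : ℝ) := by linarith
      exact_mod_cast this
    calc S.card ≤ (O ∪ Fr).card := Finset.card_le_card hSsub
      _ ≤ O.card + Fr.card := Finset.card_union_le _ _
      _ ≤ O.card + 1 := by omega
      _ ≤ k := h3

lemma aux_decomp {n k : ℕ} :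
    ∀ d : ℕ, ∀ x : Fin n → ℝ,
      (∀ i, 0 ≤ x i) → (∀ i, x i ≤ 1) → (∑ i, x i) ≤ (k : ℝ) →
      (Finset.univ.filter (fun i => x i ≠ 0 ∧ x i ≠ 1)).card ≤ d →
      Decomp (fun w => (∀ i, 0 ≤ w i) ∧ (∀ i, w i ≤ 1) ∧ (∑ i, w i) = (∑ i, x i) ∧
        (Finset.univ.filter (fun i => w i ≠ 0)).card ≤ k) x := by
  intro d
  induction d with
  | zero =>
    intro x h0 h1 hs hf
    exact decomp_self ⟨h0, h1, rfl,
      terminal_card x h0 h1 hs (le_trans hf (Nat.zero_le 1))⟩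
  | succ d ih =>
    intro x h0 h1 hs hf
    by_cases hex : ∃ i j, i ≠ j ∧ (x i ≠ 0 ∧ x i ≠ 1) ∧ (x j ≠ 0 ∧ x j ≠ 1)
    · obtain ⟨i, j, hij, hxi, hxj⟩ := hex
      have hxi0 : 0 < x i := lt_of_le_of_ne (h0 i) (Ne.symm hxi.1)
      have hxi1 : x i < 1 := lt_of_le_of_ne (h1 i) hxi.2
      have hxj0 : 0 < x j := lt_of_le_of_ne (h0 j) (Ne.symm hxj.1)
      have hxj1 : x j < 1 := lt_of_le_of_ne (h1 j) hxj.2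
      set a := min (1 - x i) (x j) with ha
      set b := min (x i) (1 - x j) with hb
      have ha1 : a ≤ 1 - x i := min_le_left _ _
      have ha2 : a ≤ x j := min_le_right _ _
      have hb1 : b ≤ x i := min_le_left _ _
      have hb2 : b ≤ 1 - x j := min_le_right _ _
      have ha0 : 0 < a := lt_min (by linarith) hxj0
      have hb0 : 0 < b := lt_min hxi0 (by linarith)
      have hab : (0:ℝ) < a + b := by linarith
      have hab' : a + b ≠ 0 := ne_of_gt hab
      set y : Fin n → ℝ :=
        fun m => x m + ((if m = i then a else 0) - (if m = j then a else 0)) with hy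
      set z : Fin n → ℝ :=
        fun m => x m - ((if m = i then b else 0) - (if m = j then b else 0)) with hz
      have hyi : y i = x i + a := by simp [hy, hij]
      have hyj : y j = x j - a := by simp [hy, hij.symm]; ring
      have hym : ∀ m, m ≠ i → m ≠ j → y m = x m := by
        intro m hmi hmj; simp [hy, hmi, hmj]
      have hzi : z i = x i - b := by simp [hz, hij]
      have hzj : z j = x j + b := by simp [hz, hij.symm]
      have hzm : ∀ m, m ≠ i → m ≠ j → z m = x m := by
        intro m hmi hmj; simp [hz, hmi, hmj]
      have hxdec : x = (b/(a+b)) • y + (1 - b/(a+b)) • z := by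
        funext m
        simp only [Pi.add_apply, Pi.smul_apply, smul_eq_mul]
        by_cases hmi : m = i
        · subst hmi; rw [hyi, hzi]; field_simp; ring
        · by_cases hmj : m = j
          · subst hmj; rw [hyj, hzj]; field_simp; ring
          · rw [hym m hmi hmj, hzm m hmi hmj]; field_simp; ring
      have hy0 : ∀ m, 0 ≤ y m := by
        intro m
        by_cases hmi : m = i
        · rw [hmi, hyi]; linarith
        · by_cases hmj : m = j
          · rw [hmj, hyj]; linarith
          · rw [hym m hmi hmj]; exact h0 m
      have hy1 : ∀ m, y m ≤ 1 := by
        intro m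
        by_cases hmi : m = i
        · rw [hmi, hyi]; linarith
        · by_cases hmj : m = j
          · rw [hmj, hyj]; linarith [h1 j]
          · rw [hym m hmi hmj]; exact h1 m
      have hz0 : ∀ m, 0 ≤ z m := by
        intro m
        by_cases hmi : m = i
        · rw [hmi, hzi]; linarith
        · by_cases hmj : m = j
          · rw [hmj, hzj]; linarith [h0 j]
          · rw [hzm m hmi hmj]; exact h0 m
      have hz1 : ∀ m, z m ≤ 1 := by
        intro m
        by_cases hmi : m = i
        · rw [hmi, hzi]; linarith [h1 i]
        · by_cases hmj : m = j
          · rw [hmj, hzj]; linarith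
          · rw [hzm m hmi hmj]; exact h1 m
      have hysum : (∑ m, y m) = ∑ m, x m := by
        simp [hy, Finset.sum_add_distrib, Finset.sum_sub_distrib, Finset.sum_ite_eq']
      have hzsum : (∑ m, z m) = ∑ m, x m := by
        simp [hz, Finset.sum_add_distrib, Finset.sum_sub_distrib, Finset.sum_ite_eq',
          sub_sub_cancel]
      have hfrsub : ∀ (u : Fin n → ℝ), (∀ m, m ≠ i → m ≠ j → u m = x m) →
          (Finset.univ.filter (fun m => u m ≠ 0 ∧ u m ≠ 1)) ⊆
          (Finset.univ.filter (fun m => x m ≠ 0 ∧ x m ≠ 1)) := by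
        intro u hu m hm
        simp only [Finset.mem_filter, Finset.mem_univ, true_and] at hm ⊢
        by_cases hmi : m = i
        · subst hmi; exact hxi
        · by_cases hmj : m = j
          · subst hmj; exact hxj
          · rwa [hu m hmi hmj] at hm
      have hycard : (Finset.univ.filter (fun m => y m ≠ 0 ∧ y m ≠ 1)).card ≤ d := by
        have hsub := hfrsub y hym
        have hwit : ∃ m₀, m₀ ∈ (Finset.univ.filter (fun m => x m ≠ 0 ∧ x m ≠ 1)) ∧
            m₀ ∉ (Finset.univ.filter (fun m => y m ≠ 0 ∧ y m ≠ 1)) := by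
          rcases min_cases (1 - x i) (x j) with ⟨heq, _⟩ | ⟨heq, _⟩
          · refine ⟨i, by simp [hxi], ?_⟩
            simp only [Finset.mem_filter, Finset.mem_univ, true_and, not_and_or, not_not]
            right; rw [hyi, ha, heq]; ring
          · refine ⟨j, by simp [hxj], ?_⟩
            simp only [Finset.mem_filter, Finset.mem_univ, true_and, not_and_or, not_not]
            left; rw [hyj, ha, heq]; ring
        obtain ⟨m₀, hm₀x, hm₀y⟩ := hwit
        have : (Finset.univ.filter (fun m => y m ≠ 0 ∧ y m ≠ 1)) ⊂
            (Finset.univ.filter (fun m => x m ≠ 0 ∧ x m ≠ 1)) :=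
          Finset.ssubset_iff_of_subset hsub |>.mpr ⟨m₀, hm₀x, hm₀y⟩
        have := Finset.card_lt_card this
        omega
      have hzcard : (Finset.univ.filter (fun m => z m ≠ 0 ∧ z m ≠ 1)).card ≤ d := by
        have hsub := hfrsub z hzm
        have hwit : ∃ m₀, m₀ ∈ (Finset.univ.filter (fun m => x m ≠ 0 ∧ x m ≠ 1)) ∧
            m₀ ∉ (Finset.univ.filter (fun m => z m ≠ 0 ∧ z m ≠ 1)) := by
          rcases min_cases (x i) (1 - x j) with ⟨heq, _⟩ | ⟨heq, _⟩
          · refine ⟨i, by simp [hxi], ?_⟩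
            simp only [Finset.mem_filter, Finset.mem_univ, true_and, not_and_or, not_not]
            left; rw [hzi, hb, heq]; ring
          · refine ⟨j, by simp [hxj], ?_⟩
            simp only [Finset.mem_filter, Finset.mem_univ, true_and, not_and_or, not_not]
            right; rw [hzj, hb, heq]; ring
        obtain ⟨m₀, hm₀x, hm₀z⟩ := hwit
        have : (Finset.univ.filter (fun m => z m ≠ 0 ∧ z m ≠ 1)) ⊂
            (Finset.univ.filter (fun m => x m ≠ 0 ∧ x m ≠ 1)) :=
          Finset.ssubset_iff_of_subset hsub |>.mpr ⟨m₀, hm₀x, hm₀z⟩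
        have := Finset.card_lt_card this
        omega
      have hy_dec := ih y hy0 hy1 (by rw [hysum]; exact hs) hycard
      have hz_dec := ih z hz0 hz1 (by rw [hzsum]; exact hs) hzcard
      refine decomp_combine (lam := b/(a+b)) (by positivity)
        (by rw [div_le_one hab]; linarith) hxdec
        (decomp_mono ?_ hy_dec) (decomp_mono ?_ hz_dec)
      · exact fun w hw => ⟨hw.1, hw.2.1, by rw [hw.2.2.1, hysum], hw.2.2.2⟩
      · exact fun w hw => ⟨hw.1, hw.2.1, by rw [hw.2.2.1, hzsum], hw.2.2.2⟩
    · push_neg at hex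
      have hf1 : (Finset.univ.filter (fun i => x i ≠ 0 ∧ x i ≠ 1)).card ≤ 1 := by
        refine Finset.card_le_one.mpr ?_
        intro p hp q hq
        simp only [Finset.mem_filter, Finset.mem_univ, true_and] at hp hq
        by_contra hpq
        exact hq.2 (hex p q hpq hp hq.1)
      exact decomp_self ⟨h0, h1, rfl, terminal_card x h0 h1 hs hf1⟩

/-- ℓ₁-norm invariant convex k-sparse decomposition. -/
theorem l1_invariant_convex_sparse_decomposition
    {n k : ℕ} (hk : 0 < k) (hkn : k ≤ n) {C : ℝ} (hC : 0 < C)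
    (v : Fin n → ℝ) (hv1 : l1 v ≤ C) (hvinf : ∀ i, |v i| ≤ C / k) :
    ∃ (M : ℕ) (w : Fin M → Fin n → ℝ) (x : Fin M → ℝ),
      (∀ t, 0 ≤ x t) ∧ (∑ t, x t) = 1 ∧
      (v = ∑ t, x t • w t) ∧
      (∀ t, Sparse k (w t) ∧ l1 (w t) = l1 v ∧ ∀ i, |w t i| ≤ C / k) := by
  classical
  have hkR : (0:ℝ) < (k:ℝ) := by exact_mod_cast hk
  set α := C / (k:ℝ) with hα
  have hα0 : 0 < α := div_pos hC hkR
  set σ : Fin n → ℝ := fun i => if v i < 0 then -1 else 1 with hσ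
  have hσ1 : ∀ i, |σ i| = 1 := by
    intro i; simp only [hσ]; split <;> simp
  have hσv : ∀ i, σ i * |v i| = v i := by
    intro i; simp only [hσ]; split
    · rw [abs_of_neg ‹_›]; ring
    · rw [abs_of_nonneg (not_lt.mp ‹_›)]; ring
  set x : Fin n → ℝ := fun i => |v i| / α with hx
  have hx0 : ∀ i, 0 ≤ x i := fun i => div_nonneg (abs_nonneg _) hα0.le
  have hx1 : ∀ i, x i ≤ 1 := fun i => (div_le_one hα0).mpr (hvinf i)
  have hαx : ∀ i, α * x i = |v i| := by
    intro i; rw [hx]; field_simp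
  have hxs : (∑ i, x i) ≤ (k:ℝ) := by
    have h1 : (∑ i, x i) = (∑ i, |v i|) / α := by
      rw [hx, Finset.sum_div]
    rw [h1, div_le_iff₀ hα0]
    have : (k:ℝ) * α = C := by rw [hα]; field_simp
    rw [this]
    exact hv1
  obtain ⟨M, y, l, hl0, hl1, hxeq, hP⟩ := aux_decomp (n := n) (k := k) n x hx0 hx1 hxs
    (le_trans (Finset.card_filter_le _ _) (by simp))
  have habs : ∀ t i, |α * (σ i * y t i)| = α * y t i := by
    intro t i
    rw [abs_mul, abs_mul, hσ1, abs_of_pos hα0, abs_of_nonneg ((hP t).1 i)]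
    ring
  refine ⟨M, fun t i => α * (σ i * y t i), l, hl0, hl1, ?_, ?_⟩
  · funext i
    have hxi := congrFun hxeq i
    simp only [Finset.sum_apply, Pi.smul_apply, smul_eq_mul] at hxi ⊢
    rw [← hσv i, ← hαx i, hxi, Finset.mul_sum, Finset.mul_sum]
    exact Finset.sum_congr rfl fun t _ => by ring
  · intro t
    obtain ⟨hy0, hy1, hysum, hycard⟩ := hP t
    refine ⟨⟨Finset.univ.filter (fun i => y t i ≠ 0), hycard, ?_⟩, ?_, ?_⟩
    · intro i hi
      simp only [Finset.mem_filter, Finset.mem_univ, true_and, not_not] at hi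
      simp [hi]
    · have h1 : l1 (fun i => α * (σ i * y t i)) = α * ∑ i, y t i := by
        simp only [l1]
        rw [Finset.sum_congr rfl fun i _ => habs t i, ← Finset.mul_sum]
      rw [h1, hysum]
      simp only [l1, Finset.mul_sum]
      exact Finset.sum_congr rfl fun i _ => hαx i
    · intro i
      rw [habs t i]
      calc α * y t i ≤ α * 1 := mul_le_mul_of_nonneg_left (hy1 i) hα0.le
        _ = α := mul_one α
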